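/- Let a1, a3, b1, b3, c, d be strictly positive real numbers with a1·b3 ≠ a3·b1, and set τ = a1/(a1 + a3), so τ ∈ (0,1). Then τ·log₂(1 + (a1/τ)/(1 + c)) + (1 − τ)·log₂(1 + (a3/(1 − τ))/(1 + c)) + τ·log₂(1 + d/(1 + b1/τ)) + (1 − τ)·log₂(1 + d/(1 + b3/(1 − τ))) > log₂(1 + (a1 + a3)/(1 + c)) + log₂(1 + d/(1 + b1 + b3)). -/

import Mathlib

open Real

open Set in
lemma g_strictConvex {d : ℝ} (hd : 0 < d) :
    StrictConvexOn ℝ (Set.Ioi (0:ℝ)) (fun t : ℝ => Real.log (t + d) - Real.log t) := by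
  have hderiv : ∀ t ∈ Set.Ioi (0:ℝ),
      deriv (fun t : ℝ => Real.log (t + d) - Real.log t) t = (t + d)⁻¹ - t⁻¹ := by
    intro t ht
    have ht0 : (0:ℝ) < t := ht
    have h1 : HasDerivAt (fun t : ℝ => Real.log (t + d)) ((t + d)⁻¹) t := by
      have := (Real.hasDerivAt_log (show t + d ≠ 0 by positivity)).comp t
        ((hasDerivAt_id t).add_const d)
      rw [mul_one] at this; exact this
    have h2 : HasDerivAt Real.log t⁻¹ t := Real.hasDerivAt_log ht0.ne'
    exact (h1.sub h2).deriv
  apply StrictMonoOn.strictConvexOn_of_deriv (convex_Ioi 0)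
  · apply ContinuousOn.sub
    · apply Real.continuousOn_log.comp (Continuous.continuousOn (by continuity))
      intro t ht
      have : (0:ℝ) < t := ht
      simp only [Set.mem_compl_iff, Set.mem_singleton_iff]
      positivity
    · exact Real.continuousOn_log.mono (by intro t ht; simpa using (show (0:ℝ) < t from ht).ne')
  · rw [interior_Ioi]
    intro s hs t ht hst
    have hs0 : (0:ℝ) < s := hs
    have ht0 : (0:ℝ) < t := ht
    rw [hderiv s hs, hderiv t ht]
    have key : (s + d)⁻¹ - (t + d)⁻¹ < s⁻¹ - t⁻¹ := by
      have e1 : (s + d)⁻¹ - (t + d)⁻¹ = (t - s) / ((s + d) * (t + d)) := by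
        field_simp; ring
      have e2 : s⁻¹ - t⁻¹ = (t - s) / (s * t) := by field_simp
      rw [e1, e2]
      apply div_lt_div_of_pos_left (by linarith) (by positivity)
      nlinarith
    linarith

/-- Corollary 4 (key inequality): TDMA-TIN with time-sharing parameter
`τ = a1/(a1+a3)` strictly outperforms naive-TIN whenever `a1·b3 ≠ a3·b1`. -/
theorem tdma_tin_beats_naive_tin
    (a1 a3 b1 b3 c d τ : ℝ)
    (ha1 : 0 < a1) (ha3 : 0 < a3) (hb1 : 0 < b1) (hb3 : 0 < b3)
    (hc : 0 < c) (hd : 0 < d)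
    (hne : a1 * b3 ≠ a3 * b1)
    (hτ : τ = a1 / (a1 + a3)) :
    τ * Real.logb 2 (1 + (a1 / τ) / (1 + c)) +
        (1 - τ) * Real.logb 2 (1 + (a3 / (1 - τ)) / (1 + c)) +
        τ * Real.logb 2 (1 + d / (1 + b1 / τ)) +
        (1 - τ) * Real.logb 2 (1 + d / (1 + b3 / (1 - τ))) >
      Real.logb 2 (1 + (a1 + a3) / (1 + c)) +
        Real.logb 2 (1 + d / (1 + b1 + b3)) := by
  have hS : (0:ℝ) < a1 + a3 := by linarith
  have hτ0 : 0 < τ := by rw [hτ]; positivity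
  have hτ1 : τ < 1 := by
    rw [hτ, div_lt_one hS]; linarith
  have h1τ : 0 < 1 - τ := by linarith
  have hA : a1 / τ = a1 + a3 := by
    rw [hτ]; field_simp
  have hB : a3 / (1 - τ) = a1 + a3 := by
    rw [hτ]; field_simp; rw [show a1 + a3 - a1 = a3 by ring, div_self ha3.ne']
  -- the first two terms collapse
  rw [hA, hB]
  have hlogb : ∀ t : ℝ, 0 < t →
      Real.logb 2 (1 + d / t) = (Real.log (t + d) - Real.log t) / Real.log 2 := by
    intro t ht
    rw [show (1 : ℝ) + d / t = (t + d) / t by field_simp,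
      Real.logb, Real.log_div (by positivity) ht.ne']
  set x0 : ℝ := 1 + b1 / τ with hx0
  set y0 : ℝ := 1 + b3 / (1 - τ) with hy0
  have hx0p : (0:ℝ) < x0 := by rw [hx0]; positivity
  have hy0p : (0:ℝ) < y0 := by rw [hy0]; positivity
  have hxy : x0 ≠ y0 := by
    intro h
    have h2 : b1 / τ = b3 / (1 - τ) := by
      have := h; rw [hx0, hy0] at this; linarith
    rw [hτ, show 1 - a1 / (a1 + a3) = a3 / (a1 + a3) by field_simp; ring] at h2
    field_simp at h2
    have h3 : (a1 + a3) * (a1 * b3 - a3 * b1) = 0 := by linear_combination -(a1 + a3) * h2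
    rcases mul_eq_zero.1 h3 with h4 | h4
    · linarith
    · exact hne (by linarith)
  have hcomb : τ * x0 + (1 - τ) * y0 = 1 + b1 + b3 := by
    rw [hx0, hy0]; field_simp; ring
  have hconv := (g_strictConvex hd).2 (Set.mem_Ioi.2 hx0p) (Set.mem_Ioi.2 hy0p) hxy
      hτ0 h1τ (by ring)
  simp only [smul_eq_mul] at hconv
  rw [hcomb] at hconv
  have hL2 : (0:ℝ) < Real.log 2 := Real.log_pos one_lt_two
  rw [hlogb x0 hx0p, hlogb y0 hy0p, hlogb (1 + b1 + b3) (by positivity)]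
  have := div_lt_div_of_pos_right hconv hL2
  have heq : (τ * (Real.log (x0 + d) - Real.log x0) +
      (1 - τ) * (Real.log (y0 + d) - Real.log y0)) / Real.log 2 =
      τ * ((Real.log (x0 + d) - Real.log x0) / Real.log 2) +
      (1 - τ) * ((Real.log (y0 + d) - Real.log y0) / Real.log 2) := by ring
  rw [heq] at this
  linarith
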